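/- Every UBS V ⊆ 𝒲 contains a minimal UBS. -/

import Mathlib

open Set

variable {X : Type*}

/-- A wall: a subset with nonempty complement and nonempty itself. -/
def IsWall (h : Set X) : Prop := h.Nonempty ∧ hᶜ.Nonempty

/-- Walls `h` and `k` cross. -/
def Crosses (h k : Set X) : Prop :=
  (h ∩ k).Nonempty ∧ (h ∩ kᶜ).Nonempty ∧ (hᶜ ∩ k).Nonempty ∧ (hᶜ ∩ kᶜ).Nonempty

/-- The wall `u` lies in the halfspace `H` of the wall `w`. -/
def LiesIn (u H w : Set X) : Prop := u ≠ w ∧ (u ⊆ H ∨ uᶜ ⊆ H)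

/-- The wall `w` separates the walls `u` and `v`. -/
def Separates (w u v : Set X) : Prop :=
  u ≠ v ∧ u ≠ w ∧ v ≠ w ∧
  ∃ u' v' w', (u' = u ∨ u' = uᶜ) ∧ (v' = v ∨ v' = vᶜ) ∧ (w' = w ∨ w' = wᶜ) ∧
    u' ⊆ w' ∧ v' ⊆ w'ᶜ

/-- `S` contains a facing triple. -/
def HasFacingTriple (S : Set (Set X)) : Prop :=
  ∃ a ∈ S, ∃ b ∈ S, ∃ c ∈ S, a ≠ b ∧ a ≠ c ∧ b ≠ c ∧
    ∃ a' b' c', (a' = a ∨ a' = aᶜ) ∧ (b' = b ∨ b' = bᶜ) ∧ (c' = c ∨ c' = cᶜ) ∧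
      Disjoint a' b' ∧ Disjoint a' c' ∧ Disjoint b' c'

/-- `S` is inseparable with respect to the wall collection `W`. -/
def InseparableIn (W S : Set (Set X)) : Prop :=
  ∀ u ∈ S, ∀ v ∈ S, ∀ w ∈ W, Separates w u v → w ∈ S

/-- `S` is unidirectional: for each wall `w ∈ S`, at most one of the two halfspaces of `w`
contains infinitely many walls of `S`. -/
def Unidirectional (S : Set (Set X)) : Prop :=
  ∀ w ∈ S, {u ∈ S | LiesIn u w w}.Finite ∨ {u ∈ S | LiesIn u wᶜ w}.Finite

/-- `V` is a UBS in the wall collection `W`. -/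
def IsUBS (W V : Set (Set X)) : Prop :=
  V ⊆ W ∧ V.Infinite ∧ InseparableIn W V ∧ Unidirectional V ∧ ¬ HasFacingTriple V

/-- Almost-equivalence of sets of walls. -/
def AlmostEq (S T : Set (Set X)) : Prop := (S \ T).Finite ∧ (T \ S).Finite

/-- `U` is a minimal UBS in `W`. -/
def MinUBS (W U : Set (Set X)) : Prop :=
  IsUBS W U ∧ ∀ U', IsUBS W U' → U' ⊆ U → AlmostEq U' U

/-- `A ≺ B`: every wall of `B` crosses all but finitely many walls of `A`. -/
def Prec (A B : Set (Set X)) : Prop := ∀ b ∈ B, {a ∈ A | ¬ Crosses b a}.Finite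

/-- Distinct members of `W` determine distinct partitions. -/
def Admissible (W : Set (Set X)) : Prop := ∀ h ∈ W, ∀ k ∈ W, h ≠ k → h ≠ kᶜ

/-- No infinite subset of `W` consists of pairwise-crossing walls. -/
def NoInfCross (W : Set (Set X)) : Prop := ∀ S ⊆ W, S.Pairwise Crosses → S.Finite

/-- `W` has dimension at most `D`: every pairwise-crossing subset has cardinality at most `D`. -/
def DimLE (W : Set (Set X)) (D : ℕ) : Prop :=
  ∀ S ⊆ W, S.Pairwise Crosses → S.Finite ∧ S.ncard ≤ D

/-- `c` is a chain: an injective sequence of walls with `c n` separating `c (n-1)` and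
`c (n+1)` for `n ≥ 1`. -/
def IsChainSeq (c : ℕ → Set X) : Prop :=
  Function.Injective c ∧ ∀ n, Separates (c (n + 1)) (c n) (c (n + 2))

/-- The chain `c` is inextensible in `S`: no wall of `S` has a halfspace containing every
term of `c`. -/
def InextensibleIn (S : Set (Set X)) (c : ℕ → Set X) : Prop :=
  ¬ ∃ w ∈ S, ∃ H, (H = w ∨ H = wᶜ) ∧ ∀ n, LiesIn (c n) H w

/-- The inseparable closure in `W` of a set `C` of walls. -/
def insepClosure (W C : Set (Set X)) : Set (Set X) :=
  ⋂₀ {S | C ⊆ S ∧ S ⊆ W ∧ InseparableIn W S}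



section Ramsey

/-- Infinite Ramsey theorem for pairs, with finitely many colors. -/
lemma infinite_ramsey_pairs {κ : Type} [Finite κ] [Nonempty κ] (C : ℕ → ℕ → κ) :
    ∃ g : ℕ → ℕ, StrictMono g ∧ ∃ y : κ, ∀ i j, i < j → C (g i) (g j) = y := by
  classical
  have key : ∀ S : Set ℕ, S.Infinite →
      ∃ a ∈ S, ∃ (y : κ) (T : Set ℕ), T.Infinite ∧ T ⊆ S ∧ ∀ x ∈ T, a < x ∧ C a x = y := by
    intro S hS
    obtain ⟨a, ha⟩ := hS.nonempty
    have h1 : {x | x ∈ S ∧ a < x}.Infinite := by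
      apply Set.Infinite.mono (t := {x | x ∈ S ∧ a < x}) ?_ (hS.diff (Set.finite_Iic a))
      intro x hx
      simp only [Set.mem_diff, Set.mem_Iic, not_le] at hx
      exact ⟨hx.1, hx.2⟩
    have h2 : ∃ y : κ, {x | x ∈ S ∧ a < x ∧ C a x = y}.Infinite := by
      by_contra hc
      push_neg at hc
      have hc : ∀ y : κ, {x | x ∈ S ∧ a < x ∧ C a x = y}.Finite := hc
      have hsub : {x | x ∈ S ∧ a < x} ⊆ ⋃ y : κ, {x | x ∈ S ∧ a < x ∧ C a x = y} := by
        intro x hx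
        exact Set.mem_iUnion.2 ⟨C a x, hx.1, hx.2, rfl⟩
      exact h1 ((Set.finite_iUnion hc).subset hsub)
    obtain ⟨y, hy⟩ := h2
    exact ⟨a, ha, y, _, hy, fun x hx => hx.1, fun x hx => ⟨hx.2.1, hx.2.2⟩⟩
  choose a ha y T hTinf hTsub hT using key
  let σ : ℕ → {S : Set ℕ // S.Infinite} := fun n =>
    Nat.rec ⟨Set.univ, Set.infinite_univ⟩ (fun _ p => ⟨T p.1 p.2, hTinf p.1 p.2⟩) n
  have hσ : ∀ n, (σ (n + 1)).1 = T (σ n).1 (σ n).2 := fun n => rfl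
  set A : ℕ → ℕ := fun n => a (σ n).1 (σ n).2 with hA
  set Y : ℕ → κ := fun n => y (σ n).1 (σ n).2 with hY
  have hmem : ∀ n, A n ∈ (σ n).1 := fun n => ha _ _
  have hchain : ∀ m n, m ≤ n → (σ n).1 ⊆ (σ m).1 := by
    intro m n h
    induction n with
    | zero => simp_all
    | succ n ih =>
      rcases Nat.lt_or_ge m (n + 1) with h' | h'
      · have : (σ (n + 1)).1 ⊆ (σ n).1 := by rw [hσ n]; exact hTsub _ _
        exact this.trans (ih (Nat.lt_succ_iff.mp h'))
      · have : m = n + 1 := le_antisymm h h'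
        subst this; exact subset_rfl
  have hAY : ∀ m n, m < n → A m < A n ∧ C (A m) (A n) = Y m := by
    intro m n h
    have h1 : A n ∈ (σ (m + 1)).1 := hchain (m + 1) n h (hmem n)
    rw [hσ m] at h1
    exact hT _ _ _ h1
  have hAmono : StrictMono A := fun m n h => (hAY m n h).1
  obtain ⟨y0, hy0⟩ := Finite.exists_infinite_fiber Y
  have hinf : {n | Y n = y0}.Infinite := by
    have h := Set.infinite_coe_iff.mp hy0
    have he : Y ⁻¹' {y0} = {n | Y n = y0} := by ext n; simp
    rwa [he] at h
  refine ⟨fun i => A (Nat.nth (fun n => Y n = y0) i), ?_, y0, ?_⟩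
  · exact hAmono.comp (Nat.nth_strictMono hinf)
  · intro i j hij
    have h1 : Nat.nth (fun n => Y n = y0) i < Nat.nth (fun n => Y n = y0) j :=
      Nat.nth_strictMono hinf hij
    rw [(hAY _ _ h1).2]
    exact Nat.nth_mem_of_infinite hinf i

end Ramsey

section Walls

variable {X : Type*}

lemma crosses_symm {h k : Set X} (hc : Crosses h k) : Crosses k h := by
  obtain ⟨h1, h2, h3, h4⟩ := hc
  exact ⟨by rwa [Set.inter_comm], by rwa [Set.inter_comm], by rwa [Set.inter_comm],
    by rwa [Set.inter_comm]⟩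

lemma not_crosses_self {h : Set X} : ¬ Crosses h h := by
  rintro ⟨-, h2, -, -⟩
  simp at h2

lemma half_pair {u H u' : Set X} (hH : H = u ∨ H = uᶜ) (hu' : u' = u ∨ u' = uᶜ) :
    u' = H ∨ u' = Hᶜ := by
  rcases hH with rfl | h
  · exact hu'
  · rcases hu' with rfl | rfl
    · right; rw [h, compl_compl]
    · left; rw [h]

lemma compl_half {v Hv : Set X} (h : Hv = v ∨ Hv = vᶜ) : Hvᶜ = v ∨ Hvᶜ = vᶜ := by
  rcases h with rfl | rfl
  · right; rfl
  · left; exact compl_compl v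

lemma crosses_of_pieces {h k h' k' : Set X} (hh : h' = h ∨ h' = hᶜ) (hk : k' = k ∨ k' = kᶜ)
    (h1 : (h' ∩ k').Nonempty) (h2 : (h' ∩ k'ᶜ).Nonempty)
    (h3 : (h'ᶜ ∩ k').Nonempty) (h4 : (h'ᶜ ∩ k'ᶜ).Nonempty) : Crosses h k := by
  rcases hh with rfl | rfl <;> rcases hk with rfl | rfl
  · exact ⟨h1, h2, h3, h4⟩
  · rw [compl_compl] at h2 h4; exact ⟨h2, h1, h4, h3⟩
  · rw [compl_compl] at h3 h4; exact ⟨h3, h4, h1, h2⟩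
  · simp only [compl_compl] at h2 h3 h4; exact ⟨h4, h3, h2, h1⟩

lemma no_cross_seq {W : Set (Set X)} (hWnic : NoInfCross W) (f : ℕ → Set X)
    (hfW : ∀ i, f i ∈ W) (hfinj : Function.Injective f)
    (hcr : ∀ i j, i < j → Crosses (f i) (f j)) : False := by
  have hpair : (Set.range f).Pairwise Crosses := by
    rintro _ ⟨i, rfl⟩ _ ⟨j, rfl⟩ hne
    rcases lt_trichotomy i j with h | h | h
    · exact hcr i j h
    · exact absurd (congrArg f h) hne
    · exact crosses_symm (hcr j i h)
  have hfin := hWnic (Set.range f) (Set.range_subset_iff.2 hfW) hpair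
  exact Set.infinite_range_of_injective hfinj hfin

lemma insep_self (W : Set (Set X)) : InseparableIn W W := fun _ _ _ _ _ hw _ => hw

lemma subset_insepClosure (W C : Set (Set X)) : C ⊆ insepClosure W C :=
  fun _ hx => Set.mem_sInter.2 fun _ hS => hS.1 hx

lemma insepClosure_subset_of (W C : Set (Set X)) {T : Set (Set X)}
    (h1 : C ⊆ T) (h2 : T ⊆ W) (h3 : InseparableIn W T) : insepClosure W C ⊆ T :=
  Set.sInter_subset_of_mem ⟨h1, h2, h3⟩

lemma insepClosure_subset_W (W C : Set (Set X)) (hCW : C ⊆ W) : insepClosure W C ⊆ W :=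
  insepClosure_subset_of W C hCW subset_rfl (insep_self W)

lemma insepClosure_insep (W C : Set (Set X)) : InseparableIn W (insepClosure W C) := by
  intro u hu v hv w hw hsep
  exact Set.mem_sInter.2 fun S hS =>
    hS.2.2 u (Set.mem_sInter.1 hu S hS) v (Set.mem_sInter.1 hv S hS) w hw hsep

lemma unidirectional_subset {U K : Set (Set X)} (h : Unidirectional U) (hKU : K ⊆ U) :
    Unidirectional K := by
  intro w hw
  rcases h w (hKU hw) with hf | hf
  · exact Or.inl (hf.subset fun u hu => ⟨hKU hu.1, hu.2⟩)
  · exact Or.inr (hf.subset fun u hu => ⟨hKU hu.1, hu.2⟩)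

lemma facing_subset {U K : Set (Set X)} (h : ¬ HasFacingTriple U) (hKU : K ⊆ U) :
    ¬ HasFacingTriple K := by
  rintro ⟨a, ha, b, hb, c, hc, rest⟩
  exact h ⟨a, hKU ha, b, hKU hb, c, hKU hc, rest⟩

/-- The set of walls having a halfspace sandwiched between two halfspaces of the chain `c`. -/
def BtwSet (W : Set (Set X)) (c : ℕ → Set X) : Set (Set X) :=
  {w | w ∈ W ∧ ∃ H, (H = w ∨ H = wᶜ) ∧ ∃ a b, c a ⊆ H ∧ H ⊆ c b}

lemma btw_insep (W : Set (Set X)) (c : ℕ → Set X)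
    (hmono : ∀ m n, m ≤ n → c m ⊆ c n) (hcne : ∀ n, (c n).Nonempty)
    (hcco : ∀ n, (c n)ᶜ.Nonempty) :
    InseparableIn W (BtwSet W c) := by
  rintro u ⟨huW, Hu, hHu, au, bu, hau, hbu⟩ v ⟨hvW, Hv, hHv, av, bv, hav, hbv⟩ w hwW hsep
  obtain ⟨huv, huw, hvw, u', v', w', hu', hv', hw', hs1, hs2⟩ := hsep
  have hu2 : u' = Hu ∨ u' = Huᶜ := half_pair hHu hu'
  have hv2 : v' = Hv ∨ v' = Hvᶜ := half_pair hHv hv'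
  refine ⟨hwW, ?_⟩
  rcases hu2 with rfl | rfl <;> rcases hv2 with rfl | rfl
  · -- u' = Hu, v' = Hv : impossible
    exfalso
    obtain ⟨x, hx⟩ := hcne 0
    have e1 : x ∈ w' := hs1 (hau (hmono 0 au (Nat.zero_le _) hx))
    have e2 : x ∈ w'ᶜ := hs2 (hav (hmono 0 av (Nat.zero_le _) hx))
    exact e2 e1
  · -- u' = Hu, v' = Hvᶜ : w' is between c au and c bv
    refine ⟨w', hw', au, bv, hau.trans hs1, ?_⟩
    exact (Set.compl_subset_compl.mp hs2).trans hbv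
  · -- u' = Huᶜ, v' = Hv : w'ᶜ is between c av and c bu
    refine ⟨w'ᶜ, compl_half hw', av, bu, hav.trans hs2, ?_⟩
    have h5 : w'ᶜ ⊆ Huᶜᶜ := Set.compl_subset_compl.mpr hs1
    rw [compl_compl] at h5
    exact h5.trans hbu
  · -- u' = Huᶜ, v' = Hvᶜ : impossible
    exfalso
    have h5 : w'ᶜ ⊆ Huᶜᶜ := Set.compl_subset_compl.mpr hs1
    rw [compl_compl] at h5
    have h6 : w' ⊆ Hv := Set.compl_subset_compl.mp hs2
    obtain ⟨x, hx⟩ := hcco (max bu bv)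
    by_cases hxw : x ∈ w'
    · exact hx (hmono bv (max bu bv) (le_max_right _ _) (hbv (h6 hxw)))
    · exact hx (hmono bu (max bu bv) (le_max_left _ _) (hbu (h5 hxw)))

end Walls

section Chains

variable {X : Type*}

lemma exists_chain {W U : Set (Set X)} (hWnic : NoInfCross W) (hUW : U ⊆ W)
    (hUinf : U.Infinite) (hUft : ¬ HasFacingTriple U) :
    ∃ γ c : ℕ → Set X, (∀ n, γ n ∈ U) ∧ (∀ m n, m ≠ n → γ m ≠ γ n) ∧
      (∀ n, c n = γ n ∨ c n = (γ n)ᶜ) ∧ (∀ m n, m < n → c m ⊆ c n ∧ c m ≠ c n) := by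
  classical
  set f : ℕ → Set X := fun i => ((Set.Infinite.natEmbedding U hUinf) i : Set X) with hfdef
  have hfU : ∀ i, f i ∈ U := fun i => ((Set.Infinite.natEmbedding U hUinf) i).2
  have hfinj : Function.Injective f := fun i j h =>
    (Set.Infinite.natEmbedding U hUinf).injective (Subtype.ext h)
  set C : ℕ → ℕ → Fin 5 := fun i j =>
    if f i ∩ f j = ∅ then 0 else if (f i)ᶜ ∩ (f j)ᶜ = ∅ then 1
    else if f i ⊆ f j then 2 else if f j ⊆ f i then 3 else 4 with hCdef
  obtain ⟨g, hg, y, hy⟩ := infinite_ramsey_pairs C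
  have hgi : ∀ i j, i ≠ j → f (g i) ≠ f (g j) := fun i j hij h => hij (hg.injective (hfinj h))
  have hrel : ∀ i j, i < j →
      (y = 0 ∧ f (g i) ∩ f (g j) = ∅) ∨ (y = 1 ∧ (f (g i))ᶜ ∩ (f (g j))ᶜ = ∅) ∨
      (y = 2 ∧ f (g i) ⊆ f (g j)) ∨ (y = 3 ∧ f (g j) ⊆ f (g i)) ∨
      (y = 4 ∧ f (g i) ∩ f (g j) ≠ ∅ ∧ (f (g i))ᶜ ∩ (f (g j))ᶜ ≠ ∅ ∧
        ¬ f (g i) ⊆ f (g j) ∧ ¬ f (g j) ⊆ f (g i)) := by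
    intro i j hij
    have h := hy i j hij
    simp only [hCdef] at h
    split_ifs at h with h1 h2 h3 h4
    · exact Or.inl ⟨h.symm, h1⟩
    · exact Or.inr (Or.inl ⟨h.symm, h2⟩)
    · exact Or.inr (Or.inr (Or.inl ⟨h.symm, h3⟩))
    · exact Or.inr (Or.inr (Or.inr (Or.inl ⟨h.symm, h4⟩)))
    · exact Or.inr (Or.inr (Or.inr (Or.inr ⟨h.symm, h1, h2, h3, h4⟩)))
  rcases hrel 0 1 Nat.zero_lt_one with ⟨hy0, -⟩ | ⟨hy0, -⟩ | ⟨hy0, -⟩ | ⟨hy0, -⟩ | ⟨hy0, -⟩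
  · -- y = 0 : pairwise disjoint, facing triple
    exfalso
    have hall : ∀ i j, i < j → f (g i) ∩ f (g j) = ∅ := by
      intro i j hij
      rcases hrel i j hij with ⟨-, h⟩ | ⟨h', -⟩ | ⟨h', -⟩ | ⟨h', -⟩ | ⟨h', -⟩
      · exact h
      all_goals rw [hy0] at h'
      all_goals exact absurd h' (by decide)
    refine hUft ⟨f (g 0), hfU _, f (g 1), hfU _, f (g 2), hfU _,
      hgi 0 1 (by omega), hgi 0 2 (by omega), hgi 1 2 (by omega),
      f (g 0), f (g 1), f (g 2), Or.inl rfl, Or.inl rfl, Or.inl rfl, ?_, ?_, ?_⟩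
    · exact Set.disjoint_iff_inter_eq_empty.mpr (hall 0 1 (by omega))
    · exact Set.disjoint_iff_inter_eq_empty.mpr (hall 0 2 (by omega))
    · exact Set.disjoint_iff_inter_eq_empty.mpr (hall 1 2 (by omega))
  · -- y = 1 : complements pairwise disjoint, facing triple
    exfalso
    have hall : ∀ i j, i < j → (f (g i))ᶜ ∩ (f (g j))ᶜ = ∅ := by
      intro i j hij
      rcases hrel i j hij with ⟨h', -⟩ | ⟨-, h⟩ | ⟨h', -⟩ | ⟨h', -⟩ | ⟨h', -⟩
      case inr.inl => exact h
      all_goals rw [hy0] at h'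
      all_goals exact absurd h' (by decide)
    refine hUft ⟨f (g 0), hfU _, f (g 1), hfU _, f (g 2), hfU _,
      hgi 0 1 (by omega), hgi 0 2 (by omega), hgi 1 2 (by omega),
      (f (g 0))ᶜ, (f (g 1))ᶜ, (f (g 2))ᶜ, Or.inr rfl, Or.inr rfl, Or.inr rfl, ?_, ?_, ?_⟩
    · exact Set.disjoint_iff_inter_eq_empty.mpr (hall 0 1 (by omega))
    · exact Set.disjoint_iff_inter_eq_empty.mpr (hall 0 2 (by omega))
    · exact Set.disjoint_iff_inter_eq_empty.mpr (hall 1 2 (by omega))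
  · -- y = 2 : increasing chain
    have hall : ∀ i j, i < j → f (g i) ⊆ f (g j) := by
      intro i j hij
      rcases hrel i j hij with ⟨h', -⟩ | ⟨h', -⟩ | ⟨-, h⟩ | ⟨h', -⟩ | ⟨h', -⟩
      case inr.inr.inl => exact h
      all_goals rw [hy0] at h'
      all_goals exact absurd h' (by decide)
    exact ⟨fun t => f (g t), fun t => f (g t), fun n => hfU _, fun m n h => hgi m n h,
      fun n => Or.inl rfl, fun m n h => ⟨hall m n h, hgi m n (Nat.ne_of_lt h)⟩⟩
  · -- y = 3 : decreasing chain, use complements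
    have hall : ∀ i j, i < j → f (g j) ⊆ f (g i) := by
      intro i j hij
      rcases hrel i j hij with ⟨h', -⟩ | ⟨h', -⟩ | ⟨h', -⟩ | ⟨-, h⟩ | ⟨h', -⟩
      case inr.inr.inr.inl => exact h
      all_goals rw [hy0] at h'
      all_goals exact absurd h' (by decide)
    refine ⟨fun t => f (g t), fun t => (f (g t))ᶜ, fun n => hfU _, fun m n h => hgi m n h,
      fun n => Or.inr rfl, fun m n h => ⟨Set.compl_subset_compl.mpr (hall m n h), ?_⟩⟩
    intro hcon
    exact hgi m n (Nat.ne_of_lt h) (compl_injective hcon)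
  · -- y = 4 : pairwise crossing, contradiction
    exfalso
    have hall : ∀ i j, i < j → f (g i) ∩ f (g j) ≠ ∅ ∧ (f (g i))ᶜ ∩ (f (g j))ᶜ ≠ ∅ ∧
        ¬ f (g i) ⊆ f (g j) ∧ ¬ f (g j) ⊆ f (g i) := by
      intro i j hij
      rcases hrel i j hij with ⟨h', -⟩ | ⟨h', -⟩ | ⟨h', -⟩ | ⟨h', -⟩ | ⟨-, h⟩
      case inr.inr.inr.inr => exact h
      all_goals rw [hy0] at h'
      all_goals exact absurd h' (by decide)
    apply no_cross_seq hWnic (fun i => f (g i)) (fun i => hUW (hfU _)) (hfinj.comp hg.injective)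
    intro i j hij
    obtain ⟨h1, h2, h3, h4⟩ := hall i j hij
    obtain ⟨x1, hx1a, hx1b⟩ := Set.not_subset.mp h3
    obtain ⟨x2, hx2a, hx2b⟩ := Set.not_subset.mp h4
    exact ⟨Set.nonempty_iff_ne_empty.mpr h1, ⟨x1, hx1a, hx1b⟩, ⟨x2, hx2b, hx2a⟩,
      Set.nonempty_iff_ne_empty.mpr h2⟩

lemma slice_finite {U : Set (Set X)} (hUuni : Unidirectional U)
    (γ c : ℕ → Set X) (hγU : ∀ n, γ n ∈ U) (hhalf : ∀ n, c n = γ n ∨ c n = (γ n)ᶜ)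
    (hmono : ∀ m n, m ≤ n → c m ⊆ c n) (hγne : ∀ m n, m ≠ n → γ m ≠ γ n) (N : ℕ) :
    {u | u ∈ U ∧ (u ⊆ c N ∨ uᶜ ⊆ c N)}.Finite := by
  have hD2 : {u | u ∈ U ∧ LiesIn u (c N)ᶜ (γ N)}.Infinite := by
    have hinj : Function.Injective (fun i => γ (N + 1 + i)) := by
      intro i j h
      by_contra hne
      exact hγne _ _ (by omega) h
    apply (Set.infinite_range_of_injective hinj).mono
    rintro x ⟨i, rfl⟩
    refine ⟨hγU _, hγne _ _ (by omega), ?_⟩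
    show γ (N + 1 + i) ⊆ (c N)ᶜ ∨ (γ (N + 1 + i))ᶜ ⊆ (c N)ᶜ
    have hsub : (c (N + 1 + i))ᶜ ⊆ (c N)ᶜ :=
      Set.compl_subset_compl.mpr (hmono N (N + 1 + i) (by omega))
    rcases hhalf (N + 1 + i) with h | h
    · right; rw [← h]; exact hsub
    · left
      have he : γ (N + 1 + i) = (c (N + 1 + i))ᶜ := by rw [h, compl_compl]
      rw [he]; exact hsub
  have hD1 : {u | u ∈ U ∧ LiesIn u (c N) (γ N)}.Finite := by
    rcases hUuni (γ N) (hγU N) with hf | hf <;> rcases hhalf N with h | h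
    · rw [h]; exact hf
    · exfalso
      have he : (c N)ᶜ = γ N := by rw [h, compl_compl]
      rw [he] at hD2
      exact hD2 hf
    · exfalso
      have he : (c N)ᶜ = (γ N)ᶜ := by rw [h]
      rw [he] at hD2
      exact hD2 hf
    · rw [h]; exact hf
  apply (hD1.union (Set.finite_singleton (γ N))).subset
  rintro u ⟨huU, hsub⟩
  by_cases h : u = γ N
  · exact Or.inr (by simp [h])
  · exact Or.inl ⟨huU, h, hsub⟩

lemma extract {W U : Set (Set X)} (hWadm : Admissible W)
    (hWnic : NoInfCross W) (hUW : U ⊆ W) (hUuni : Unidirectional U)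
    (γ c : ℕ → Set X) (hγU : ∀ n, γ n ∈ U) (hhalf : ∀ n, c n = γ n ∨ c n = (γ n)ᶜ)
    (hmono : ∀ m n, m ≤ n → c m ⊆ c n) (hcne : ∀ n, (c n).Nonempty)
    (hcco : ∀ n, (c n)ᶜ.Nonempty) (hγne : ∀ m n, m ≠ n → γ m ≠ γ n)
    (S : Set (Set X)) (hSinf : S.Infinite) (hSU : S ⊆ U)
    (hwit : ∀ w ∈ S, ∃ H, (H = w ∨ H = wᶜ) ∧ ∃ a b, c a ⊆ H ∧ H ⊆ c b)
    (N : ℕ) (hN : ∀ w ∈ S, ∀ H, (H = w ∨ H = wᶜ) → (∃ b, H ⊆ c b) → ¬ c N ⊆ H) :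
    ∃ ws e : ℕ → Set X, (∀ t, ws t ∈ S) ∧ (∀ s t, s ≠ t → ws s ≠ ws t) ∧
      (∀ t, e t = ws t ∨ e t = (ws t)ᶜ) ∧ (∀ s t, s < t → e s ⊆ e t ∧ e s ≠ e t) ∧
      (∀ t, c 0 ⊆ e t) ∧ (∀ t, ∃ b, e t ⊆ c b) ∧
      (∀ t, ((c N)ᶜ ∩ e t).Nonempty) ∧ (∀ t, ¬ c N ⊆ e t) := by
  classical
  have hS'inf : (S \ {u | u ∈ U ∧ (u ⊆ c N ∨ uᶜ ⊆ c N)}).Infinite :=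
    hSinf.diff (slice_finite hUuni γ c hγU hhalf hmono hγne N)
  set S' : Set (Set X) := S \ {u | u ∈ U ∧ (u ⊆ c N ∨ uᶜ ⊆ c N)} with hS'def
  set f : ℕ → Set X := fun i => ((Set.Infinite.natEmbedding S' hS'inf) i : Set X) with hfdef
  have hfS' : ∀ i, f i ∈ S' := fun i => ((Set.Infinite.natEmbedding S' hS'inf) i).2
  have hfS : ∀ i, f i ∈ S := fun i => (hfS' i).1
  have hfinj : Function.Injective f := fun i j h =>
    (Set.Infinite.natEmbedding S' hS'inf).injective (Subtype.ext h)
  have hw' : ∀ i, ∃ H, (H = f i ∨ H = (f i)ᶜ) ∧ ∃ a b, c a ⊆ H ∧ H ⊆ c b :=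
    fun i => hwit (f i) (hfS i)
  choose H hH a b hab1 hab2 using hw'
  have hc0 : ∀ i, c 0 ⊆ H i := fun i => (hmono 0 (a i) (Nat.zero_le _)).trans (hab1 i)
  have hnN : ∀ i, ¬ c N ⊆ H i := fun i => hN (f i) (hfS i) (H i) (hH i) ⟨b i, hab2 i⟩
  have hnN2 : ∀ i, ¬ H i ⊆ c N := by
    intro i hcon
    apply (hfS' i).2
    refine ⟨hSU (hfS i), ?_⟩
    rcases hH i with h | h
    · left; rw [← h]; exact hcon
    · right; rw [← h]; exact hcon
  have hHinj : ∀ i j, i ≠ j → H i ≠ H j := by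
    intro i j hij heq
    have hiW : f i ∈ W := hUW (hSU (hfS i))
    have hjW : f j ∈ W := hUW (hSU (hfS j))
    have hfij : f i ≠ f j := fun h => hij (hfinj h)
    rcases hH i with h1 | h1 <;> rcases hH j with h2 | h2
    · exact hfij (by rw [← h1, ← h2, heq])
    · exact hWadm (f i) hiW (f j) hjW hfij (by rw [← h1, heq, h2])
    · exact hWadm (f j) hjW (f i) hiW hfij.symm (by rw [← h2, ← heq, h1])
    · exact hfij (compl_injective (by rw [← h1, ← h2, heq]))
  set C : ℕ → ℕ → Fin 3 := fun i j =>
    if H i ⊆ H j then 0 else if H j ⊆ H i then 1 else 2 with hCdef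
  obtain ⟨g, hg, y, hy⟩ := infinite_ramsey_pairs C
  have hrel : ∀ i j, i < j →
      (y = 0 ∧ H (g i) ⊆ H (g j)) ∨ (y = 1 ∧ H (g j) ⊆ H (g i)) ∨
      (y = 2 ∧ ¬ H (g i) ⊆ H (g j) ∧ ¬ H (g j) ⊆ H (g i)) := by
    intro i j hij
    have h := hy i j hij
    simp only [hCdef] at h
    split_ifs at h with h1 h2
    · exact Or.inl ⟨h.symm, h1⟩
    · exact Or.inr (Or.inl ⟨h.symm, h2⟩)
    · exact Or.inr (Or.inr ⟨h.symm, h1, h2⟩)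
  rcases hrel 0 1 Nat.zero_lt_one with ⟨hy0, -⟩ | ⟨hy0, -⟩ | ⟨hy0, -⟩
  · -- increasing : done
    have hall : ∀ i j, i < j → H (g i) ⊆ H (g j) := by
      intro i j hij
      rcases hrel i j hij with ⟨-, h⟩ | ⟨h', -⟩ | ⟨h', -⟩
      · exact h
      all_goals rw [hy0] at h'
      all_goals exact absurd h' (by decide)
    refine ⟨fun t => f (g t), fun t => H (g t), fun t => hfS _,
      fun s t hst h => hst (hg.injective (hfinj h)), fun t => hH _,
      fun s t hst => ⟨hall s t hst, hHinj _ _ (fun h => Nat.ne_of_lt hst (hg.injective h))⟩,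
      fun t => hc0 _, fun t => ⟨b (g t), hab2 _⟩, ?_, fun t => hnN _⟩
    intro t
    obtain ⟨x, hx1, hx2⟩ := Set.not_subset.mp (hnN2 (g t))
    exact ⟨x, hx2, hx1⟩
  · -- decreasing : contradiction with unidirectionality
    exfalso
    have hall : ∀ i j, i < j → H (g j) ⊆ H (g i) := by
      intro i j hij
      rcases hrel i j hij with ⟨h', -⟩ | ⟨-, h⟩ | ⟨h', -⟩
      case inr.inl => exact h
      all_goals rw [hy0] at h'
      all_goals exact absurd h' (by decide)
    have hw₀U : f (g 0) ∈ U := hSU (hfS _)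
    have hside1 : {u | u ∈ U ∧ LiesIn u (H (g 0)) (f (g 0))}.Infinite := by
      have hinj1 : Function.Injective (fun t => f (g (t + 1))) := by
        intro i j h
        have h2 := hg.injective (hfinj h)
        omega
      apply (Set.infinite_range_of_injective hinj1).mono
      rintro x ⟨t, rfl⟩
      refine ⟨hSU (hfS _), ?_, ?_⟩
      · intro h
        have h2 := hg.injective (hfinj h)
        omega
      · show f (g (t + 1)) ⊆ H (g 0) ∨ (f (g (t + 1)))ᶜ ⊆ H (g 0)
        have hsub : H (g (t + 1)) ⊆ H (g 0) := hall 0 (t + 1) (by omega)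
        rcases hH (g (t + 1)) with h | h
        · left; rw [← h]; exact hsub
        · right; rw [← h]; exact hsub
    have hside2 : {u | u ∈ U ∧ LiesIn u (H (g 0))ᶜ (f (g 0))}.Infinite := by
      have hinj2 : Function.Injective (fun i => γ (b (g 0) + i)) := by
        intro i j h
        by_contra hne
        exact hγne _ _ (by omega) h
      apply ((Set.infinite_range_of_injective hinj2).diff
        (Set.finite_singleton (f (g 0)))).mono
      rintro x ⟨⟨i, rfl⟩, hxne⟩
      refine ⟨hγU _, fun h => hxne (by simp [h]), ?_⟩
      show γ (b (g 0) + i) ⊆ (H (g 0))ᶜ ∨ (γ (b (g 0) + i))ᶜ ⊆ (H (g 0))ᶜ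
      have hsub : (c (b (g 0) + i))ᶜ ⊆ (H (g 0))ᶜ :=
        Set.compl_subset_compl.mpr ((hab2 (g 0)).trans (hmono _ _ (by omega)))
      rcases hhalf (b (g 0) + i) with h | h
      · right; rw [← h]; exact hsub
      · left
        have he : γ (b (g 0) + i) = (c (b (g 0) + i))ᶜ := by rw [h, compl_compl]
        rw [he]; exact hsub
    rcases hUuni (f (g 0)) hw₀U with hf | hf <;> rcases hH (g 0) with h | h
    · rw [h] at hside1; exact hside1 hf
    · rw [h, compl_compl] at hside2; exact hside2 hf
    · rw [h] at hside2; exact hside2 hf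
    · rw [h] at hside1; exact hside1 hf
  · -- crossing : contradiction
    exfalso
    have hall : ∀ i j, i < j → ¬ H (g i) ⊆ H (g j) ∧ ¬ H (g j) ⊆ H (g i) := by
      intro i j hij
      rcases hrel i j hij with ⟨h', -⟩ | ⟨h', -⟩ | ⟨-, h⟩
      case inr.inr => exact h
      all_goals rw [hy0] at h'
      all_goals exact absurd h' (by decide)
    apply no_cross_seq hWnic (fun i => f (g i)) (fun i => hUW (hSU (hfS _)))
      (hfinj.comp hg.injective)
    intro i j hij
    obtain ⟨hnsub1, hnsub2⟩ := hall i j hij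
    apply crosses_of_pieces (hH (g i)) (hH (g j))
    · obtain ⟨x, hx⟩ := hcne 0
      exact ⟨x, hc0 _ hx, hc0 _ hx⟩
    · obtain ⟨x, hx1, hx2⟩ := Set.not_subset.mp hnsub1
      exact ⟨x, hx1, hx2⟩
    · obtain ⟨x, hx1, hx2⟩ := Set.not_subset.mp hnsub2
      exact ⟨x, hx2, hx1⟩
    · obtain ⟨x, hx⟩ := hcco (max (b (g i)) (b (g j)))
      refine ⟨x, fun hmem => hx ?_, fun hmem => hx ?_⟩
      · exact hmono _ _ (le_max_left _ _) (hab2 (g i) hmem)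
      · exact hmono _ _ (le_max_right _ _) (hab2 (g j) hmem)

lemma closure_ubs {W U : Set (Set X)} (hU : IsUBS W U) (C0 : Set (Set X)) (hC0 : C0 ⊆ U)
    (hC0inf : C0.Infinite) :
    IsUBS W (insepClosure W C0) ∧ insepClosure W C0 ⊆ U := by
  obtain ⟨hUW, hUinf, hUins, hUuni, hUft⟩ := hU
  have hsubU : insepClosure W C0 ⊆ U := insepClosure_subset_of W C0 hC0 hUW hUins
  have hCW : C0 ⊆ W := hC0.trans hUW
  exact ⟨⟨insepClosure_subset_W W C0 hCW, hC0inf.mono (subset_insepClosure W C0),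
    insepClosure_insep W C0, unidirectional_subset hUuni hsubU, facing_subset hUft hsubU⟩,
    hsubU⟩

lemma build_cross {W U : Set (Set X)} (hU : IsUBS W U)
    (γ c : ℕ → Set X) (hhalf : ∀ n, c n = γ n ∨ c n = (γ n)ᶜ)
    (hmono : ∀ m n, m ≤ n → c m ⊆ c n) (hcne : ∀ n, (c n).Nonempty)
    (hcco : ∀ n, (c n)ᶜ.Nonempty) (N : ℕ)
    (ws e : ℕ → Set X) (hwsU : ∀ t, ws t ∈ U) (hwsne : ∀ s t, s ≠ t → ws s ≠ ws t)
    (hehalf : ∀ t, e t = ws t ∨ e t = (ws t)ᶜ)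
    (hemono : ∀ s t, s < t → e s ⊆ e t ∧ e s ≠ e t)
    (he0 : ∀ t, c 0 ⊆ e t) (heb : ∀ t, ∃ b, e t ⊆ c b)
    (hecross : ∀ t, ((c N)ᶜ ∩ e t).Nonempty) (hecN : ∀ t, ¬ c N ⊆ e t) :
    ∃ U₁, IsUBS W U₁ ∧ U₁ ⊆ U ∧ ∀ y ∈ U₁, Crosses (γ N) y := by
  have hUW : U ⊆ W := hU.1
  have hrange : Set.range ws ⊆ U := Set.range_subset_iff.2 hwsU
  have hwsinj : Function.Injective ws := by
    intro s t h
    by_contra hne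
    exact hwsne s t hne h
  obtain ⟨hU₁ubs, hU₁U⟩ := closure_ubs hU (Set.range ws) hrange
    (Set.infinite_range_of_injective hwsinj)
  refine ⟨insepClosure W (Set.range ws), hU₁ubs, hU₁U, ?_⟩
  have hemono' : ∀ s t, s ≤ t → e s ⊆ e t := by
    intro s t h
    rcases Nat.lt_or_ge s t with h' | h'
    · exact (hemono s t h').1
    · have he : s = t := le_antisymm h h'
      rw [he]
  have hBe : insepClosure W (Set.range ws) ⊆ BtwSet W e := by
    apply insepClosure_subset_of
    · rintro x ⟨t, rfl⟩
      exact ⟨hUW (hwsU t), e t, hehalf t, t, t, subset_rfl, subset_rfl⟩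
    · exact fun x hx => hx.1
    · apply btw_insep W e hemono'
      · intro t
        obtain ⟨x, hx⟩ := hcne 0
        exact ⟨x, he0 t hx⟩
      · intro t
        obtain ⟨bb, hbb⟩ := heb t
        obtain ⟨x, hx⟩ := hcco bb
        exact ⟨x, fun hmem => hx (hbb hmem)⟩
  intro y hy
  obtain ⟨hyW, Hy, hHy, s, t, hs, ht⟩ := hBe hy
  apply crosses_of_pieces (hhalf N) hHy
  · obtain ⟨x, hx⟩ := hcne 0
    exact ⟨x, hmono 0 N (Nat.zero_le _) hx, hs (he0 s hx)⟩
  · obtain ⟨x, hx1, hx2⟩ := Set.not_subset.mp (hecN t)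
    exact ⟨x, hx1, fun hmem => hx2 (ht hmem)⟩
  · obtain ⟨x, hx1, hx2⟩ := hecross s
    exact ⟨x, hx1, hs hx2⟩
  · obtain ⟨bb, hbb⟩ := heb t
    obtain ⟨x, hx⟩ := hcco (max bb N)
    exact ⟨x, fun hmem => hx (hmono N _ (le_max_right _ _) hmem),
      fun hmem => hx (hmono bb _ (le_max_left _ _) (hbb (ht hmem)))⟩

end Chains

section Main

variable {X : Type*}

lemma main_step {W : Set (Set X)} (hWwall : ∀ h ∈ W, IsWall h) (hWadm : Admissible W)
    (hWnic : NoInfCross W) {U : Set (Set X)} (hU : IsUBS W U)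
    (hnomin : ∀ U₀, U₀ ⊆ U → ¬ MinUBS W U₀) :
    ∃ x ∈ U, ∃ U₁, IsUBS W U₁ ∧ U₁ ⊆ U ∧ ∀ y ∈ U₁, Crosses x y := by
  classical
  obtain ⟨hUW, hUinf, hUins, hUuni, hUft⟩ := hU
  obtain ⟨γ, c, hγU, hγne, hhalf, hpair⟩ := exists_chain hWnic hUW hUinf hUft
  have hγW : ∀ n, γ n ∈ W := fun n => hUW (hγU n)
  have hmono : ∀ m n, m ≤ n → c m ⊆ c n := by
    intro m n h
    rcases Nat.lt_or_ge m n with h' | h'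
    · exact (hpair m n h').1
    · have he : m = n := le_antisymm h h'
      rw [he]
  have hcne : ∀ n, (c n).Nonempty := by
    intro n
    rcases hhalf n with h | h
    · rw [h]; exact (hWwall _ (hγW n)).1
    · rw [h]; exact (hWwall _ (hγW n)).2
  have hcco : ∀ n, (c n)ᶜ.Nonempty := by
    intro n
    rcases hhalf n with h | h
    · rw [h]; exact (hWwall _ (hγW n)).2
    · rw [h, compl_compl]; exact (hWwall _ (hγW n)).1
  have hγinj : Function.Injective γ := by
    intro m n h
    by_contra hne
    exact hγne m n hne h
  obtain ⟨hKubs, hKU⟩ := closure_ubs ⟨hUW, hUinf, hUins, hUuni, hUft⟩ (Set.range γ)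
    (Set.range_subset_iff.2 hγU) (Set.infinite_range_of_injective hγinj)
  set K := insepClosure W (Set.range γ) with hKdef
  have hKW : K ⊆ W := hKubs.1
  have hKB : K ⊆ BtwSet W c := by
    apply insepClosure_subset_of
    · rintro x ⟨n, rfl⟩
      exact ⟨hγW n, c n, hhalf n, n, n, subset_rfl, subset_rfl⟩
    · exact fun x hx => hx.1
    · exact btw_insep W c hmono hcne hcco
  have hex : ∃ U', IsUBS W U' ∧ U' ⊆ K ∧ ¬ AlmostEq U' K := by
    by_contra hcon
    push_neg at hcon
    exact hnomin K hKU ⟨hKubs, fun U' h1 h2 => hcon U' h1 h2⟩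
  obtain ⟨U', hU'ubs, hU'K, hnae⟩ := hex
  have hU'ins : InseparableIn W U' := hU'ubs.2.2.1
  have hU'inf : U'.Infinite := hU'ubs.2.1
  have hdiffinf : (K \ U').Infinite := by
    by_contra hcon
    rw [Set.not_infinite] at hcon
    exact hnae ⟨by rw [Set.diff_eq_empty.mpr hU'K]; exact Set.finite_empty, hcon⟩
  by_cases hcase : ∀ m, ∃ v ∈ U', ∃ Hv, (Hv = v ∨ Hv = vᶜ) ∧ c m ⊆ Hv ∧ ∃ bv, Hv ⊆ c bv
  · -- Case I : arbitrarily high witnesses inside U'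
    obtain ⟨u₀, hu₀⟩ := hU'inf.nonempty
    obtain ⟨hu₀W, H₀, hH₀, a₀, b₀, ha₀, hb₀⟩ := hKB (hU'K hu₀)
    have I1 : ∀ m, b₀ ≤ m → γ m ∈ U' := by
      intro m hm
      by_cases htriv : γ m ∈ U'
      · exact htriv
      obtain ⟨v, hvU', Hv, hHv, hcm, bv, hbv⟩ := hcase m
      have hvne : v ≠ γ m := fun h => htriv (h ▸ hvU')
      have hu₀ne : u₀ ≠ γ m := fun h => htriv (h ▸ hu₀)
      have hH₀m : H₀ ⊆ c m := hb₀.trans (hmono b₀ m hm)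
      have huv : u₀ ≠ v := by
        rintro rfl
        rcases half_pair hH₀ hHv with h | h
        · -- Hv = H₀, so H₀ = c m
          have e3 : H₀ = c m := Set.Subset.antisymm hH₀m (h ▸ hcm)
          apply hu₀ne
          by_contra hne'
          have hne2 : u₀ ≠ (γ m)ᶜ := hWadm u₀ hu₀W (γ m) (hγW m) hne'
          have hu₀cm : u₀ = c m ∨ u₀ = (c m)ᶜ := by
            rcases hH₀ with h' | h'
            · left; rw [← e3, ← h']
            · right; rw [← e3, h', compl_compl]
          rcases hu₀cm with h' | h' <;> rcases hhalf m with h'' | h''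
          · exact hne' (by rw [h', h''])
          · exact hne2 (by rw [h', h''])
          · exact hne2 (by rw [h', h''])
          · exact hne' (by rw [h', h'', compl_compl])
        · -- Hv = H₀ᶜ : H₀ ⊆ H₀ᶜ, contradiction
          have hss : H₀ ⊆ H₀ᶜ := hH₀m.trans (h ▸ hcm)
          obtain ⟨x, hx⟩ := hcne a₀
          exact hss (ha₀ hx) (ha₀ hx)
      apply hU'ins u₀ hu₀ v hvU' (γ m) (hγW m)
      exact ⟨huv, hu₀ne, hvne, H₀, Hvᶜ, c m, hH₀, compl_half hHv, hhalf m, hH₀m,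
        Set.compl_subset_compl.mpr hcm⟩
    have I2 : ∀ w ∈ W, ∀ Hw, (Hw = w ∨ Hw = wᶜ) →
        ∀ aa bb, b₀ ≤ aa → c aa ⊆ Hw → Hw ⊆ c bb → w ∈ U' := by
      intro w hwW Hw hHw aa bb haa hca hcb
      by_cases h1 : w = γ aa
      · exact h1 ▸ I1 aa haa
      by_cases h2 : w = γ (max bb (aa + 1))
      · exact h2 ▸ I1 (max bb (aa + 1)) (by omega)
      apply hU'ins (γ aa) (I1 aa haa) (γ (max bb (aa + 1))) (I1 (max bb (aa + 1)) (by omega))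
        w hwW
      refine ⟨hγne aa (max bb (aa + 1)) (by omega), fun h => h1 h.symm, fun h => h2 h.symm,
        c aa, (c (max bb (aa + 1)))ᶜ, Hw, hhalf aa, compl_half (hhalf (max bb (aa + 1))),
        hHw, hca, Set.compl_subset_compl.mpr (hcb.trans (hmono bb (max bb (aa + 1))
          (le_max_left _ _)))⟩
    have hNprop : ∀ w ∈ K \ U', ∀ Hw, (Hw = w ∨ Hw = wᶜ) →
        (∃ bb, Hw ⊆ c bb) → ¬ c b₀ ⊆ Hw := by
      rintro w ⟨hwK, hwn⟩ Hw hHw ⟨bb, hbb⟩ hcb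
      exact hwn (I2 w (hKW hwK) Hw hHw b₀ bb le_rfl hcb hbb)
    obtain ⟨ws, e, hws1, hws2, hws3, hws4, hws5, hws6, hws7, hws8⟩ :=
      extract hWadm hWnic hUW hUuni γ c hγU hhalf hmono hcne hcco hγne
        (K \ U') hdiffinf (Set.diff_subset.trans hKU)
        (fun w hw => (hKB hw.1).2) b₀ hNprop
    obtain ⟨U₁, h1, h2, h3⟩ := build_cross ⟨hUW, hUinf, hUins, hUuni, hUft⟩ γ c hhalf hmono
      hcne hcco b₀ ws e (fun t => (Set.diff_subset.trans hKU) (hws1 t)) hws2 hws3 hws4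
      hws5 hws6 hws7 hws8
    exact ⟨γ b₀, hγU b₀, U₁, h1, h2, h3⟩
  · -- Case II : witnesses in U' have bounded lower ends
    push_neg at hcase
    obtain ⟨N, hN⟩ := hcase
    have hNprop : ∀ w ∈ U', ∀ Hw, (Hw = w ∨ Hw = wᶜ) → (∃ bb, Hw ⊆ c bb) → ¬ c N ⊆ Hw := by
      rintro w hw Hw hHw ⟨bb, hbb⟩ hcN
      exact hN w hw Hw hHw hcN bb hbb
    obtain ⟨ws, e, hws1, hws2, hws3, hws4, hws5, hws6, hws7, hws8⟩ :=
      extract hWadm hWnic hUW hUuni γ c hγU hhalf hmono hcne hcco hγne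
        U' hU'inf (hU'K.trans hKU) (fun w hw => (hKB (hU'K hw)).2) N hNprop
    obtain ⟨U₁, h1, h2, h3⟩ := build_cross ⟨hUW, hUinf, hUins, hUuni, hUft⟩ γ c hhalf hmono
      hcne hcco N ws e (fun t => (hU'K.trans hKU) (hws1 t)) hws2 hws3 hws4 hws5 hws6 hws7 hws8
    exact ⟨γ N, hγU N, U₁, h1, h2, h3⟩

end Main

/-- Every UBS contains a minimal UBS. -/
theorem ubs_contains_minimal (W : Set (Set X))
    (hWc : W.Countable) (hWwall : ∀ h ∈ W, IsWall h)
    (hWadm : Admissible W) (hWnic : NoInfCross W)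
    (V : Set (Set X)) (hV : IsUBS W V) :
    ∃ U, U ⊆ V ∧ MinUBS W U := by
  classical
  by_contra hno
  push_neg at hno
  have key : ∀ p : {U : Set (Set X) // IsUBS W U ∧ U ⊆ V},
      ∃ x ∈ p.1, ∃ U₁, IsUBS W U₁ ∧ U₁ ⊆ p.1 ∧ ∀ y ∈ U₁, Crosses x y := by
    intro p
    exact main_step hWwall hWadm hWnic p.2.1
      (fun U₀ hU₀ hmin => hno U₀ (hU₀.trans p.2.2) hmin)
  choose xx hxx UU hUU1 hUU2 hUU3 using key
  let g : ℕ → {U : Set (Set X) // IsUBS W U ∧ U ⊆ V} := fun n =>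
    Nat.rec ⟨V, hV, subset_rfl⟩ (fun _ p => ⟨UU p, hUU1 p, (hUU2 p).trans p.2.2⟩) n
  have hg : ∀ n, (g (n + 1)).1 = UU (g n) := fun n => rfl
  have hgsub : ∀ m n, m < n → (g n).1 ⊆ UU (g m) := by
    intro m n h
    induction n with
    | zero => omega
    | succ n ih =>
      rcases Nat.lt_or_ge m n with h' | h'
      · have e : (g (n + 1)).1 ⊆ (g n).1 := by rw [hg n]; exact hUU2 (g n)
        exact e.trans (ih h')
      · have he : m = n := by omega
        subst he
        rw [hg m]
  set x : ℕ → Set X := fun n => xx (g n) with hxdef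
  have hcross : ∀ m n, m < n → Crosses (x m) (x n) := fun m n h =>
    hUU3 (g m) (x n) (hgsub m n h (hxx (g n)))
  have hxW : ∀ n, x n ∈ W := fun n => (g n).2.1.1 (hxx (g n))
  have hxinj : Function.Injective x := by
    intro m n h
    by_contra hne
    rcases Nat.lt_or_ge m n with h' | h'
    · have hc := hcross m n (by omega)
      rw [h] at hc
      exact not_crosses_self hc
    · have h'' : n < m := by omega
      have hc := hcross n m h''
      rw [h] at hc
      exact not_crosses_self hc
  exact no_cross_seq hWnic x hxW hxinj hcross
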